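/- arXiv:math/0703422 — 7 statements merged into one kernel-verified Lean document; each statement's English description precedes it below -/
import Mathlib

section
/- Let R be a commutative ring and let ∂_x and ∂_t be two commuting derivations on R. Let A and Y be n×n matrices over R with ∂_x Y = A·Y. Fix i ≥ 0 and define (i+1)n×(i+1)n block matrices, with blocks indexed by p,q ∈ {0,…,i}: A_i has (p,q)-block equal to C(p,q)·∂_t^{p−q}A for q ≤ p and 0 otherwise, and Y_i has (p,q)-block equal to C(p,q)·∂_t^{p−q}Y for q ≤ p and 0 otherwise. Then ∂_x Y_i = A_i·Y_i; moreover, if Y is invertible then Y_i is invertible. -/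
open Finset

section Helpers

variable {R : Type*} [CommRing R] (D : R → R)
    (hadd : ∀ a b : R, D (a + b) = D a + D b)

include hadd

private lemma der_zero : D 0 = 0 := by
  have h := hadd 0 0
  rw [add_zero] at h
  nth_rewrite 1 [← add_zero (D 0)] at h
  exact (add_left_cancel h).symm

private lemma der_iter_add (m : ℕ) (a b : R) :
    D^[m] (a + b) = D^[m] a + D^[m] b := by
  induction m generalizing a b with
  | zero => simp
  | succ k ih => simp [Function.iterate_succ_apply, hadd, ih]

/-- The iterate of `D` as an `AddMonoidHom`. -/
private def derIterHom (m : ℕ) : R →+ R :=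
  AddMonoidHom.mk' (D^[m]) (der_iter_add D hadd m)

private lemma derIterHom_apply (m : ℕ) (a : R) : derIterHom D hadd m a = D^[m] a := rfl

private lemma der_iter_nsmul (m c : ℕ) (a : R) :
    D^[m] (c • a) = c • D^[m] a := by
  exact map_nsmul (derIterHom D hadd m) c a

private lemma der_nsmul (c : ℕ) (a : R) : D (c • a) = c • D a := by
  simpa using der_iter_nsmul D hadd 1 c a

private lemma der_iter_sum {ι : Type*} (m : ℕ) (s : Finset ι) (f : ι → R) :
    D^[m] (∑ j ∈ s, f j) = ∑ j ∈ s, D^[m] (f j) := by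
  exact map_sum (derIterHom D hadd m) f s

private lemma der_iter_leibniz
    (hmul : ∀ a b : R, D (a * b) = D a * b + a * D b) (m : ℕ) (x y : R) :
    D^[m] (x * y) = ∑ j ∈ range (m + 1), (m.choose j) • (D^[j] x * D^[m - j] y) := by
  induction m generalizing x y with
  | zero => simp
  | succ k ih =>
    set g : ℕ → R := fun j => D^[j] x * D^[k + 1 - j] y with hg
    have hsum : D^[k + 1] (x * y)
        = ∑ j ∈ range (k + 1), (k.choose j) • g (j + 1)
          + ∑ j ∈ range (k + 1), (k.choose j) • g j := by
      have hs := der_iter_sum D hadd 1 (range (k + 1))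
        (fun j => (k.choose j) • (D^[j] x * D^[k - j] y))
      simp only [Function.iterate_one] at hs
      rw [Function.iterate_succ_apply', ih, hs, ← Finset.sum_add_distrib]
      refine Finset.sum_congr rfl fun j hj => ?_
      have hj' : j ≤ k := Nat.lt_succ_iff.mp (mem_range.mp hj)
      have h1 : D ((k.choose j) • (D^[j] x * D^[k - j] y))
          = (k.choose j) • (D (D^[j] x) * D^[k - j] y + D^[j] x * D (D^[k - j] y)) := by
        rw [der_nsmul D hadd, hmul]
      rw [h1, smul_add]
      congr 1
      · congr 1
        simp only [hg]
        rw [← Function.iterate_succ_apply' D j x]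
        congr 2
        omega
      · congr 1
        simp only [hg]
        rw [← Function.iterate_succ_apply' D (k - j) y]
        congr 2
        omega
    rw [hsum]
    have htarget : ∑ j ∈ range (k + 2), ((k + 1).choose j) • g j
        = ∑ j ∈ range (k + 1), (k.choose j) • g (j + 1)
          + ∑ j ∈ range (k + 1), (k.choose j) • g j := by
      rw [Finset.sum_range_succ' (fun j => ((k + 1).choose j) • g j) (k + 1)]
      simp only [Nat.choose_succ_succ', add_smul, Finset.sum_add_distrib]
      rw [add_assoc]
      congr 1
      have : ∑ j ∈ range (k + 1), (k.choose (j + 1)) • g (j + 1)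
            + (k.choose 0) • g 0
          = ∑ j ∈ range (k + 2), (k.choose j) • g j := by
        rw [Finset.sum_range_succ' (fun j => (k.choose j) • g j) (k + 1)]
      simp only [Nat.choose_zero_right] at this ⊢
      rw [this, Finset.sum_range_succ, Nat.choose_succ_self, zero_smul, add_zero]
    rw [← htarget]

omit hadd in
private lemma der_comm_iter (Dx : R → R) (hcomm : ∀ a : R, Dx (D a) = D (Dx a))
    (m : ℕ) (a : R) : Dx (D^[m] a) = D^[m] (Dx a) := by
  induction m generalizing a with
  | zero => simp
  | succ k ih =>
    rw [Function.iterate_succ_apply', hcomm, ih]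
    exact (Function.iterate_succ_apply' D k (Dx a)).symm

end Helpers

/-- given commuting derivations `∂ₓ, ∂ₜ` on a commutative ring `R` and
`∂ₓ Y = A * Y`, the `i`-th prolongation matrices `Aᵢ, Yᵢ` (block matrices with
`(p,q)`-block `C(p,q) • ∂ₜ^{p-q} A`, resp. `C(p,q) • ∂ₜ^{p-q} Y`, for `q ≤ p` and `0`
otherwise) satisfy `∂ₓ Yᵢ = Aᵢ * Yᵢ`; moreover if `Y` is invertible then so is `Yᵢ`. -/
theorem stmt_1 {R : Type*} [CommRing R] {n : ℕ}
    (Dx Dt : R → R)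
    (hx_add : ∀ a b : R, Dx (a + b) = Dx a + Dx b)
    (hx_leibniz : ∀ a b : R, Dx (a * b) = Dx a * b + a * Dx b)
    (ht_add : ∀ a b : R, Dt (a + b) = Dt a + Dt b)
    (ht_leibniz : ∀ a b : R, Dt (a * b) = Dt a * b + a * Dt b)
    (hcomm : ∀ a : R, Dx (Dt a) = Dt (Dx a))
    (A Y : Matrix (Fin n) (Fin n) R)
    (hY : Y.map Dx = A * Y)
    (i : ℕ)
    (Ai Yi : Matrix (Fin (i + 1) × Fin n) (Fin (i + 1) × Fin n) R)
    (hAi : ∀ p q : Fin (i + 1) × Fin n,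
      Ai p q = if (q.1 : ℕ) ≤ (p.1 : ℕ) then
          ((p.1 : ℕ).choose (q.1 : ℕ)) • (Dt^[(p.1 : ℕ) - (q.1 : ℕ)] (A p.2 q.2)) else 0)
    (hYi : ∀ p q : Fin (i + 1) × Fin n,
      Yi p q = if (q.1 : ℕ) ≤ (p.1 : ℕ) then
          ((p.1 : ℕ).choose (q.1 : ℕ)) • (Dt^[(p.1 : ℕ) - (q.1 : ℕ)] (Y p.2 q.2)) else 0) :
    Yi.map Dx = Ai * Yi ∧ (IsUnit Y → IsUnit Yi) := by
  have hder : ∀ a b : Fin n, Dx (Y a b) = ∑ r2 : Fin n, A a r2 * Y r2 b := by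
    intro a b
    have h := congrFun (congrFun hY a) b
    simpa [Matrix.map_apply, Matrix.mul_apply] using h
  constructor
  · ext p q
    rw [Matrix.map_apply, Matrix.mul_apply]
    simp only [hAi, hYi]
    set P : ℕ := (p.1 : ℕ) with hP
    set Q : ℕ := (q.1 : ℕ) with hQ
    by_cases h : Q ≤ P
    · rw [if_pos h]
      have hPi : P ≤ i := Nat.lt_succ_iff.mp p.1.isLt
      -- LHS computation
      have lhs_eq : Dx ((P.choose Q) • Dt^[P - Q] (Y p.2 q.2))
          = ∑ k ∈ range (P - Q + 1), ∑ r2 : Fin n,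
              ((P.choose Q) * ((P - Q).choose k)) •
                (Dt^[k] (A p.2 r2) * Dt^[P - Q - k] (Y r2 q.2)) := by
        rw [der_nsmul Dx hx_add, der_comm_iter Dt Dx hcomm, hder,
          der_iter_sum Dt ht_add, Finset.smul_sum]
        simp only [der_iter_leibniz Dt ht_add ht_leibniz, Finset.smul_sum, smul_smul]
        exact Finset.sum_comm
      rw [lhs_eq, ← Finset.sum_range_reflect]
      rw [Fintype.sum_prod_type]
      rw [Fin.sum_univ_eq_sum_range (fun m => ∑ r2 : Fin n,
          (if m ≤ P then (P.choose m) • Dt^[P - m] (A p.2 r2) else 0) *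
          (if Q ≤ m then (m.choose Q) • Dt^[m - Q] (Y r2 q.2) else 0)) (i + 1)]
      have hsub : Icc Q P ⊆ range (i + 1) := by
        intro m hm
        rw [mem_Icc] at hm
        exact mem_range.mpr (by omega)
      have hzero : ∀ m ∈ range (i + 1), m ∉ Icc Q P →
          (∑ r2 : Fin n,
            (if m ≤ P then (P.choose m) • Dt^[P - m] (A p.2 r2) else 0) *
            (if Q ≤ m then (m.choose Q) • Dt^[m - Q] (Y r2 q.2) else 0)) = 0 := by
        intro m _ hm
        rw [mem_Icc] at hm
        apply Finset.sum_eq_zero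
        intro r2 _
        by_cases hmp : m ≤ P
        · have hq : ¬ Q ≤ m := fun hq => hm ⟨hq, hmp⟩
          rw [if_neg hq, mul_zero]
        · rw [if_neg hmp, zero_mul]
      rw [← Finset.sum_subset hsub hzero]
      rw [← Finset.Ico_add_one_right_eq_Icc, Finset.sum_Ico_eq_sum_range]
      have hrange : P + 1 - Q = P - Q + 1 := by omega
      rw [hrange]
      refine Finset.sum_congr rfl fun k hk => ?_
      have hk' : k ≤ P - Q := Nat.lt_succ_iff.mp (mem_range.mp hk)
      have hQkP : Q + k ≤ P := by omega
      refine Finset.sum_congr rfl fun r2 _ => ?_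
      rw [if_pos hQkP, if_pos (Nat.le_add_right Q k)]
      rw [smul_mul_smul_comm]
      have e1 : P - Q + 1 - 1 - k = P - Q - k := by omega
      have e2 : P - Q - (P - Q - k) = k := by omega
      have e3 : P - (Q + k) = P - Q - k := by omega
      have e4 : Q + k - Q = k := by omega
      rw [e1, e2, e3, e4]
      congr 1
      rw [Nat.choose_mul (n := P) (Nat.le_add_right Q k), e4, Nat.choose_symm hk']
    · rw [if_neg h, der_zero Dx hx_add]
      symm
      apply Finset.sum_eq_zero
      intro r _
      by_cases h1 : ((r.1 : ℕ)) ≤ P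
      · have h2 : ¬ (Q ≤ (r.1 : ℕ)) := fun h2 => h (h2.trans h1)
        rw [if_neg h2, mul_zero]
      · rw [if_neg h1, zero_mul]
  · intro hYunit
    rw [Matrix.isUnit_iff_isUnit_det] at hYunit ⊢
    have hbt : Matrix.BlockTriangular Yi.transpose Prod.fst := by
      intro p q hlt
      rw [Matrix.transpose_apply, hYi]
      exact if_neg (by exact_mod_cast Nat.not_le.mpr hlt)
    rw [← Matrix.det_transpose, hbt.det]
    have hblock : ∀ k : Fin (i + 1),
        (Yi.transpose.toSquareBlock Prod.fst k).det = Y.det := by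
      intro k
      let e : {a : Fin (i + 1) × Fin n // a.1 = k} ≃ Fin n :=
        { toFun := fun a => a.1.2
          invFun := fun j => ⟨(k, j), rfl⟩
          left_inv := by rintro ⟨⟨a1, a2⟩, rfl⟩; rfl
          right_inv := fun j => rfl }
      have hb : Yi.transpose.toSquareBlock Prod.fst k = Y.transpose.submatrix e e := by
        ext a b
        obtain ⟨⟨a1, a2⟩, ha⟩ := a
        obtain ⟨⟨b1, b2⟩, hb⟩ := b
        simp only at ha hb
        subst ha
        subst hb
        simp only [Matrix.toSquareBlock_def, Matrix.of_apply, Matrix.transpose_apply,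
          Matrix.submatrix_apply, e, Equiv.coe_fn_mk]
        rw [hYi]
        simp
      rw [hb, Matrix.det_submatrix_equiv_self, Matrix.det_transpose]
    have : ∏ a ∈ Finset.image Prod.fst Finset.univ,
        (Yi.transpose.toSquareBlock Prod.fst a).det
        = ∏ _a ∈ Finset.image Prod.fst (Finset.univ : Finset (Fin (i + 1) × Fin n)), Y.det :=
      Finset.prod_congr rfl fun k _ => hblock k
    rw [this, Finset.prod_const]
    exact hYunit.pow _
end

section
/- Let R be a commutative ℚ-algebra with a derivation ∂_t, let A be an n×n matrix over R, and fix i ≥ 0. Define (i+1)n×(i+1)n block matrices with blocks indexed by p,q ∈ {0,…,i}: Ã_i has (p,q)-block C(i−q, p−q)·∂_t^{p−q}A for q ≤ p and 0 otherwise; A_i has (p,q)-block C(p,q)·∂_t^{p−q}A for q ≤ p and 0 otherwise; and D is the block diagonal matrix whose (p,p)-block is C(i,p)·I_n (I_n the n×n identity). Then D is invertible, all entries of D are integer multiples of 1 (hence annihilated by every derivation on R), and Ã_i·D = D·A_i; consequently A_i = D^{-1}·Ã_i·D. -/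
lemma aux_d_natCast {R : Type*} [CommRing R] (d : R → R)
    (hadd : ∀ a b : R, d (a + b) = d a + d b)
    (hmul : ∀ a b : R, d (a * b) = d a * b + a * d b) :
    ∀ m : ℕ, d ((m : ℕ) : R) = 0 := by
  have h1 : d 1 = 0 := by
    have := hmul 1 1
    simp only [mul_one, one_mul] at this
    exact (left_eq_add.mp this)
  intro m
  induction m with
  | zero =>
    have := hadd 0 0
    simp only [add_zero] at this
    simpa using (left_eq_add.mp this)
  | succ k ih =>
    push_cast
    rw [hadd, ih, h1, add_zero]

/-- over a commutative `ℚ`-algebra `R` with derivation `∂ₜ`, the prolongation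
matrix `Ãᵢ` (blocks `C(i-q, p-q) • ∂ₜ^{p-q} A`) and `Aᵢ` (blocks `C(p,q) • ∂ₜ^{p-q} A`) are
conjugate by the invertible constant block-diagonal matrix `D` with `(p,p)`-block
`C(i,p) • Iₙ`: all entries of `D` are integer multiples of `1` (hence killed by every
derivation), `Ãᵢ * D = D * Aᵢ`, and `Aᵢ = D⁻¹ * Ãᵢ * D`. -/
theorem stmt_2 {R : Type*} [CommRing R] [Algebra ℚ R] {n : ℕ}
    (Dt : R → R)
    (ht_add : ∀ a b : R, Dt (a + b) = Dt a + Dt b)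
    (ht_leibniz : ∀ a b : R, Dt (a * b) = Dt a * b + a * Dt b)
    (A : Matrix (Fin n) (Fin n) R)
    (i : ℕ)
    (Atilde Ai D : Matrix (Fin (i + 1) × Fin n) (Fin (i + 1) × Fin n) R)
    (hAtilde : ∀ p q : Fin (i + 1) × Fin n,
      Atilde p q = if (q.1 : ℕ) ≤ (p.1 : ℕ) then
          ((i - (q.1 : ℕ)).choose ((p.1 : ℕ) - (q.1 : ℕ))) •
            (Dt^[(p.1 : ℕ) - (q.1 : ℕ)] (A p.2 q.2)) else 0)
    (hAi : ∀ p q : Fin (i + 1) × Fin n,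
      Ai p q = if (q.1 : ℕ) ≤ (p.1 : ℕ) then
          ((p.1 : ℕ).choose (q.1 : ℕ)) • (Dt^[(p.1 : ℕ) - (q.1 : ℕ)] (A p.2 q.2)) else 0)
    (hD : D = Matrix.diagonal (fun p : Fin (i + 1) × Fin n => ((i.choose (p.1 : ℕ) : ℕ) : R))) :
    IsUnit D ∧
    (∀ p q : Fin (i + 1) × Fin n, ∃ z : ℤ, D p q = (z : R)) ∧
    (∀ d : R → R, (∀ a b : R, d (a + b) = d a + d b) →
      (∀ a b : R, d (a * b) = d a * b + a * d b) →
      ∀ p q : Fin (i + 1) × Fin n, d (D p q) = 0) ∧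
    Atilde * D = D * Ai ∧
    Ai = D⁻¹ * Atilde * D := by
  have hunit : ∀ p : Fin (i + 1) × Fin n, IsUnit ((i.choose (p.1 : ℕ) : ℕ) : R) := by
    intro p
    have hle : (p.1 : ℕ) ≤ i := Nat.lt_succ_iff.mp p.1.isLt
    have hpos : 0 < i.choose (p.1 : ℕ) := Nat.choose_pos hle
    have : IsUnit ((i.choose (p.1 : ℕ) : ℚ)) := by
      exact isUnit_iff_ne_zero.mpr (by exact_mod_cast hpos.ne')
    have := this.map (algebraMap ℚ R)
    rwa [map_natCast] at this
  have hUD : IsUnit D := by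
    rw [hD]
    apply Matrix.isUnit_diagonal.mpr
    choose u hu using hunit
    exact ⟨⟨fun p => (u p : R), fun p => (((u p)⁻¹ : Rˣ) : R),
      funext fun p => by simp, funext fun p => by simp⟩, funext fun p => hu p⟩
  have hmul : Atilde * D = D * Ai := by
    ext p q
    rw [hD, Matrix.mul_diagonal, Matrix.diagonal_mul, hAtilde, hAi]
    by_cases hqp : (q.1 : ℕ) ≤ (p.1 : ℕ)
    · simp only [hqp, if_true]
      have hpi : (p.1 : ℕ) ≤ i := Nat.lt_succ_iff.mp p.1.isLt
      have key := Nat.choose_mul (n := i) hqp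
      rw [nsmul_eq_mul, nsmul_eq_mul]
      have key2 : (i - (q.1 : ℕ)).choose ((p.1 : ℕ) - (q.1 : ℕ)) * i.choose (q.1 : ℕ)
          = i.choose (p.1 : ℕ) * (p.1 : ℕ).choose (q.1 : ℕ) := by
        rw [mul_comm]; exact key.symm
      have keyR : (((i - (q.1 : ℕ)).choose ((p.1 : ℕ) - (q.1 : ℕ)) : R)) * (i.choose (q.1 : ℕ) : R)
          = (i.choose (p.1 : ℕ) : R) * ((p.1 : ℕ).choose (q.1 : ℕ) : R) := by
        exact_mod_cast congrArg (Nat.cast : ℕ → R) key2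
      linear_combination (Dt^[(p.1 : ℕ) - (q.1 : ℕ)] (A p.2 q.2)) * keyR
    · simp [hqp]
  refine ⟨hUD, ?_, ?_, hmul, ?_⟩
  · intro p q
    rw [hD, Matrix.diagonal_apply]
    by_cases h : p = q
    · exact ⟨(i.choose (p.1 : ℕ) : ℤ), by simp [h]⟩
    · exact ⟨0, by simp [h]⟩
  · intro d hadd hlei p q
    rw [hD, Matrix.diagonal_apply]
    by_cases h : p = q
    · simp only [h, if_true]
      exact aux_d_natCast d hadd hlei _
    · simp only [h, if_false]
      have := hadd 0 0
      simp only [add_zero] at this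
      exact (left_eq_add.mp this)
  · have hdet : IsUnit D.det := (Matrix.isUnit_iff_isUnit_det D).mp hUD
    calc Ai = D⁻¹ * (D * Ai) := by
            rw [← Matrix.mul_assoc, Matrix.nonsing_inv_mul D hdet, Matrix.one_mul]
      _ = D⁻¹ * Atilde * D := by rw [← hmul, Matrix.mul_assoc]
end

section
/- Let 0 → L → M → N → 0 be a short exact sequence of differential modules over 𝕂, where the maps are 𝕂-linear and commute with the respective operators D. Assume that L, M, and N each have a full solution space. Then the induced sequence of k-vector spaces 0 → Sol(L) → Sol(M) → Sol(N) → 0, whose maps are the restrictions of id_K ⊗ (the given maps), is exact. -/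
open TensorProduct

set_option maxHeartbeats 2000000
set_option synthInstance.maxHeartbeats 400000

private lemma stmt4_aux_findim {K 𝕂 : Type*} [Field K] [Field 𝕂] [Algebra 𝕂 K]
    (k : Subfield K) {X : Type*} [AddCommGroup X] [Module 𝕂 X] [FiniteDimensional 𝕂 X]
    (S : Submodule k (K ⊗[𝕂] X))
    (hS : Module.finrank k S = Module.finrank 𝕂 X) : FiniteDimensional k S := by
  rcases Nat.eq_zero_or_pos (Module.finrank 𝕂 X) with h0 | hpos
  · have hsub : Subsingleton X := Module.finrank_zero_iff.mp h0
    have : Subsingleton (K ⊗[𝕂] X) := Unique.instSubsingleton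
    have : Subsingleton S := inferInstance
    infer_instance
  · exact FiniteDimensional.of_finrank_pos (hS ▸ hpos)

/-- let `K/𝕂` be fields of characteristic zero with a derivation `δ` on `K`
restricting to `𝕂`, and `k = ker δ` the constants. Given a short exact sequence
`0 → L → M → N → 0` of differential `𝕂`-modules whose maps commute with the operators `D`,
and assuming each of `L, M, N` has a full solution space (`dim_k Sol = dim_𝕂`), the induced
sequence `0 → Sol(L) → Sol(M) → Sol(N) → 0` (with maps the restrictions of `id_K ⊗ f`,
`id_K ⊗ g`) is exact. -/
theorem stmt_4 {K 𝕂 : Type*} [Field K] [Field 𝕂] [Algebra 𝕂 K] [CharZero K]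
    (δ : K → K)
    (hδ_add : ∀ a b : K, δ (a + b) = δ a + δ b)
    (hδ_leibniz : ∀ a b : K, δ (a * b) = δ a * b + a * δ b)
    (δ𝕂 : 𝕂 → 𝕂)
    (hcompat : ∀ a : 𝕂, δ (algebraMap 𝕂 K a) = algebraMap 𝕂 K (δ𝕂 a))
    -- k is the field of constants of δ
    (k : Subfield K) (hk : ∀ c : K, c ∈ k ↔ δ c = 0)
    -- the differential modules L, M, N over 𝕂
    {L M N : Type*}
    [AddCommGroup L] [Module 𝕂 L] [FiniteDimensional 𝕂 L]
    [AddCommGroup M] [Module 𝕂 M] [FiniteDimensional 𝕂 M]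
    [AddCommGroup N] [Module 𝕂 N] [FiniteDimensional 𝕂 N]
    (DL : L → L) (hDL_add : ∀ x y : L, DL (x + y) = DL x + DL y)
    (hDL : ∀ (a : 𝕂) (x : L), DL (a • x) = δ𝕂 a • x + a • DL x)
    (DM : M → M) (hDM_add : ∀ x y : M, DM (x + y) = DM x + DM y)
    (hDM : ∀ (a : 𝕂) (x : M), DM (a • x) = δ𝕂 a • x + a • DM x)
    (DN : N → N) (hDN_add : ∀ x y : N, DN (x + y) = DN x + DN y)
    (hDN : ∀ (a : 𝕂) (x : N), DN (a • x) = δ𝕂 a • x + a • DN x)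
    -- a short exact sequence of differential modules
    (f : L →ₗ[𝕂] M) (g : M →ₗ[𝕂] N)
    (hfD : ∀ x : L, f (DL x) = DM (f x))
    (hgD : ∀ x : M, g (DM x) = DN (g x))
    (hf_inj : Function.Injective f)
    (hexact : LinearMap.range f = LinearMap.ker g)
    (hg_surj : Function.Surjective g)
    -- the operators D_K on K ⊗ L, K ⊗ M, K ⊗ N
    (DKL : K ⊗[𝕂] L → K ⊗[𝕂] L)
    (hDKL_add : ∀ x y, DKL (x + y) = DKL x + DKL y)
    (hDKL : ∀ (c : K) (x : L), DKL (c ⊗ₜ[𝕂] x) = δ c ⊗ₜ[𝕂] x + c ⊗ₜ[𝕂] DL x)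
    (DKM : K ⊗[𝕂] M → K ⊗[𝕂] M)
    (hDKM_add : ∀ x y, DKM (x + y) = DKM x + DKM y)
    (hDKM : ∀ (c : K) (x : M), DKM (c ⊗ₜ[𝕂] x) = δ c ⊗ₜ[𝕂] x + c ⊗ₜ[𝕂] DM x)
    (DKN : K ⊗[𝕂] N → K ⊗[𝕂] N)
    (hDKN_add : ∀ x y, DKN (x + y) = DKN x + DKN y)
    (hDKN : ∀ (c : K) (x : N), DKN (c ⊗ₜ[𝕂] x) = δ c ⊗ₜ[𝕂] x + c ⊗ₜ[𝕂] DN x)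
    -- the solution spaces, as k-vector spaces
    (SL : Submodule k (K ⊗[𝕂] L)) (hSL : ∀ x, x ∈ SL ↔ DKL x = 0)
    (SM : Submodule k (K ⊗[𝕂] M)) (hSM : ∀ x, x ∈ SM ↔ DKM x = 0)
    (SN : Submodule k (K ⊗[𝕂] N)) (hSN : ∀ x, x ∈ SN ↔ DKN x = 0)
    -- L, M, N have full solution spaces
    (hfullL : Module.finrank k SL = Module.finrank 𝕂 L)
    (hfullM : Module.finrank k SM = Module.finrank 𝕂 M)
    (hfullN : Module.finrank k SN = Module.finrank 𝕂 N) :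
    -- the induced maps restrict to the solution spaces ...
    (∀ x ∈ SL, LinearMap.lTensor K f x ∈ SM) ∧
    (∀ y ∈ SM, LinearMap.lTensor K g y ∈ SN) ∧
    -- ... and give an exact sequence 0 → Sol(L) → Sol(M) → Sol(N) → 0
    (∀ x ∈ SL, LinearMap.lTensor K f x = 0 → x = 0) ∧
    (∀ y ∈ SM, (LinearMap.lTensor K g y = 0 ↔ ∃ x ∈ SL, LinearMap.lTensor K f x = y)) ∧
    (∀ z ∈ SN, ∃ y ∈ SM, LinearMap.lTensor K g y = z) := by
  classical
  -- the operators kill zero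
  have hDKL0 : DKL 0 = 0 := by
    have h := hDKL_add 0 0
    rw [add_zero] at h
    nth_rewrite 1 [← add_zero (DKL 0)] at h
    exact (add_left_cancel h).symm
  have hDKM0 : DKM 0 = 0 := by
    have h := hDKM_add 0 0
    rw [add_zero] at h
    nth_rewrite 1 [← add_zero (DKM 0)] at h
    exact (add_left_cancel h).symm
  -- lTensor f commutes with the operators
  have hcommf : ∀ x : K ⊗[𝕂] L,
      LinearMap.lTensor K f (DKL x) = DKM (LinearMap.lTensor K f x) := by
    intro x
    induction x using TensorProduct.induction_on with
    | zero =>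
      rw [hDKL0, map_zero]
      exact hDKM0.symm
    | tmul c m =>
      rw [hDKL, map_add, LinearMap.lTensor_tmul, LinearMap.lTensor_tmul,
        LinearMap.lTensor_tmul, hfD, hDKM]
    | add x y hx hy =>
      rw [hDKL_add, map_add, hx, hy, map_add, hDKM_add]
  have hcommg : ∀ x : K ⊗[𝕂] M,
      LinearMap.lTensor K g (DKM x) = DKN (LinearMap.lTensor K g x) := by
    intro x
    induction x using TensorProduct.induction_on with
    | zero =>
      have hDKN0 : DKN 0 = 0 := by
        have h := hDKN_add 0 0
        rw [add_zero] at h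
        nth_rewrite 1 [← add_zero (DKN 0)] at h
        exact (add_left_cancel h).symm
      rw [hDKM0, map_zero]
      exact hDKN0.symm
    | tmul c m =>
      rw [hDKM, map_add, LinearMap.lTensor_tmul, LinearMap.lTensor_tmul,
        LinearMap.lTensor_tmul, hgD, hDKN]
    | add x y hx hy =>
      rw [hDKM_add, map_add, hx, hy, map_add, hDKN_add]
  -- injectivity and exactness of the tensored sequence
  have hTinj : Function.Injective (LinearMap.lTensor K f) :=
    Module.Flat.lTensor_preserves_injective_linearMap f hf_inj
  have hexact' : Function.Exact f g := LinearMap.exact_iff.mpr hexact.symm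
  have hTexact : Function.Exact (LinearMap.lTensor K f) (LinearMap.lTensor K g) :=
    Module.Flat.lTensor_exact K hexact'
  -- part 1: f maps SL into SM
  have part1 : ∀ x ∈ SL, LinearMap.lTensor K f x ∈ SM := by
    intro x hx
    rw [hSM, ← hcommf, (hSL x).mp hx, map_zero]
  -- part 2: g maps SM into SN
  have part2 : ∀ y ∈ SM, LinearMap.lTensor K g y ∈ SN := by
    intro y hy
    rw [hSN, ← hcommg, (hSM y).mp hy, map_zero]
  -- part 3: injectivity on SL
  have part3 : ∀ x ∈ SL, LinearMap.lTensor K f x = 0 → x = 0 := by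
    intro x _ h
    exact hTinj (by rw [h, map_zero])
  -- part 4: exactness in the middle
  have part4 : ∀ y ∈ SM,
      (LinearMap.lTensor K g y = 0 ↔ ∃ x ∈ SL, LinearMap.lTensor K f x = y) := by
    intro y hy
    constructor
    · intro h
      obtain ⟨x, hx⟩ := (hTexact y).mp h
      refine ⟨x, ?_, hx⟩
      rw [hSL]
      apply hTinj
      rw [hcommf, hx, (hSM y).mp hy, map_zero]
    · rintro ⟨x, -, rfl⟩
      exact (hTexact _).mpr ⟨x, rfl⟩
  refine ⟨part1, part2, part3, part4, ?_⟩
  -- part 5: surjectivity, by dimension count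
  -- k-linearity of the tensored maps
  have hsmulf : ∀ (c : k) (x : K ⊗[𝕂] L),
      LinearMap.lTensor K f (c • x) = c • LinearMap.lTensor K f x := by
    intro c x
    induction x using TensorProduct.induction_on with
    | zero => rw [smul_zero, map_zero, smul_zero]
    | tmul a m =>
      rw [show c • a ⊗ₜ[𝕂] m = (c • a) ⊗ₜ[𝕂] m from rfl, LinearMap.lTensor_tmul,
        LinearMap.lTensor_tmul]
      rfl
    | add x y hx hy => rw [smul_add, map_add, hx, hy, map_add, smul_add]
  have hsmulg : ∀ (c : k) (x : K ⊗[𝕂] M),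
      LinearMap.lTensor K g (c • x) = c • LinearMap.lTensor K g x := by
    intro c x
    induction x using TensorProduct.induction_on with
    | zero => rw [smul_zero, map_zero, smul_zero]
    | tmul a m =>
      rw [show c • a ⊗ₜ[𝕂] m = (c • a) ⊗ₜ[𝕂] m from rfl, LinearMap.lTensor_tmul,
        LinearMap.lTensor_tmul]
      rfl
    | add x y hx hy => rw [smul_add, map_add, hx, hy, map_add, smul_add]
  -- the restricted maps as k-linear maps
  let ψ : SL →ₗ[k] SM :=
    { toFun := fun x => ⟨LinearMap.lTensor K f x, part1 x x.2⟩
      map_add' := fun x y => Subtype.ext (map_add (LinearMap.lTensor K f) x.1 y.1)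
      map_smul' := fun c x => Subtype.ext (hsmulf c x.1) }
  let φ : SM →ₗ[k] SN :=
    { toFun := fun y => ⟨LinearMap.lTensor K g y, part2 y y.2⟩
      map_add' := fun x y => Subtype.ext (map_add (LinearMap.lTensor K g) x.1 y.1)
      map_smul' := fun c x => Subtype.ext (hsmulg c x.1) }
  have hψinj : Function.Injective ψ := by
    intro x y hxy
    ext
    exact hTinj (congrArg Subtype.val hxy)
  have hkerφ : LinearMap.ker φ = LinearMap.range ψ := by
    ext y
    simp only [LinearMap.mem_ker, LinearMap.mem_range]
    constructor
    · intro h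
      have h0 : LinearMap.lTensor K g (y : K ⊗[𝕂] M) = 0 := congrArg Subtype.val h
      obtain ⟨x, hxSL, hx⟩ := (part4 y y.2).mp h0
      exact ⟨⟨x, hxSL⟩, Subtype.ext hx⟩
    · rintro ⟨x, rfl⟩
      exact Subtype.ext ((part4 _ (part1 x x.2)).mpr ⟨x, x.2, rfl⟩)
  -- finite dimensionality of the solution spaces
  have hFDL : FiniteDimensional k SL := stmt4_aux_findim k SL hfullL
  have hFDM : FiniteDimensional k SM := stmt4_aux_findim k SM hfullM
  have hFDN : FiniteDimensional k SN := stmt4_aux_findim k SN hfullN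
  -- finrank M = finrank L + finrank N over 𝕂
  have hrkg : Module.finrank 𝕂 (LinearMap.range g) = Module.finrank 𝕂 N := by
    rw [LinearMap.range_eq_top.mpr hg_surj]
    exact finrank_top 𝕂 N
  have hrkker : Module.finrank 𝕂 (LinearMap.ker g) = Module.finrank 𝕂 L := by
    rw [← hexact]
    exact (LinearMap.finrank_range_of_inj hf_inj)
  have hrkM : Module.finrank 𝕂 M = Module.finrank 𝕂 L + Module.finrank 𝕂 N := by
    have := LinearMap.finrank_range_add_finrank_ker g
    omega
  -- rank-nullity for φ
  have hφrn := LinearMap.finrank_range_add_finrank_ker (K := k) (V := SM) (V₂ := SN) φ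
  have hkerrk : Module.finrank k (LinearMap.ker φ) = Module.finrank 𝕂 L := by
    rw [hkerφ, LinearMap.finrank_range_of_inj hψinj, hfullL]
  have hrange : Module.finrank k (LinearMap.range φ) = Module.finrank k SN := by
    rw [hfullN]
    omega
  have htop : LinearMap.range φ = ⊤ := @Submodule.eq_top_of_finrank_eq k SN _ _ _ hFDN _ hrange
  intro z hz
  obtain ⟨y, hy⟩ := LinearMap.range_eq_top.mp htop ⟨z, hz⟩
  exact ⟨y, y.2, congrArg Subtype.val hy⟩
end

section
/- Let M and N be differential modules over 𝕂, and give M ⊗_𝕂 N the differential module structure D(m⊗n) = D(m)⊗n + m⊗D(n). Assume that M and N have full solution spaces. Then the k-linear map Sol(M) ⊗_k Sol(N) → K ⊗_𝕂 (M ⊗_𝕂 N) induced by (f⊗m) ⊗ (g⊗n) ↦ fg ⊗ (m⊗n) is injective with image exactly Sol(M ⊗_𝕂 N); in particular Sol(M) ⊗_k Sol(N) ≅ Sol(M ⊗_𝕂 N) and M ⊗_𝕂 N has a full solution space. -/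
open TensorProduct

set_option synthInstance.maxHeartbeats 1000000
set_option maxHeartbeats 1600000

section Aux

theorem aux_D_zero {V : Type*} [AddCommGroup V] (D : V → V)
    (hadd : ∀ x y, D (x + y) = D x + D y) : D 0 = 0 := by
  have h := hadd 0 0
  rw [add_zero] at h
  exact left_eq_add.mp h

theorem aux_D_sum {V ι : Type*} [AddCommGroup V] (D : V → V)
    (hadd : ∀ x y, D (x + y) = D x + D y) (t : Finset ι) (f : ι → V) :
    D (∑ j ∈ t, f j) = ∑ j ∈ t, D (f j) := by
  classical
  induction t using Finset.cons_induction with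
  | empty => simpa using aux_D_zero D hadd
  | cons a t ha ih => rw [Finset.sum_cons, Finset.sum_cons, hadd, ih]

theorem aux_DK_smul {K 𝕂 V : Type*} [Field K] [Field 𝕂] [Algebra 𝕂 K]
    [AddCommGroup V] [Module 𝕂 V]
    (δ : K → K) (hδ_mul : ∀ a b, δ (a * b) = δ a * b + a * δ b)
    (DV : V → V) (D : K ⊗[𝕂] V → K ⊗[𝕂] V)
    (hadd : ∀ x y, D (x + y) = D x + D y)
    (htmul : ∀ (c : K) (v : V), D (c ⊗ₜ v) = δ c ⊗ₜ v + c ⊗ₜ DV v)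
    (c : K) (x : K ⊗[𝕂] V) : D (c • x) = δ c • x + c • D x := by
  have h0 : D 0 = 0 := aux_D_zero D hadd
  induction x using TensorProduct.induction_on with
  | zero => simp [h0]
  | tmul f m =>
      rw [smul_tmul', smul_eq_mul, htmul, htmul, hδ_mul, add_tmul, smul_add,
        smul_tmul', smul_tmul', smul_tmul', smul_eq_mul, smul_eq_mul, smul_eq_mul]
      abel
  | add x y hx hy =>
      rw [smul_add, hadd, hx, hy, hadd, smul_add, smul_add]
      abel

theorem aux_wronskian {K V : Type*} [Field K] [AddCommGroup V] [Module K V]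
    (δ : K → K) (hδ_mul : ∀ a b, δ (a * b) = δ a * b + a * δ b)
    (k : Subfield K) (hk : ∀ c, c ∈ k ↔ δ c = 0)
    (D : V → V) (hadd : ∀ x y, D (x + y) = D x + D y)
    (hsmul : ∀ (c : K) (x : V), D (c • x) = δ c • x + c • D x)
    {ι : Type*} (v : ι → V) (hv : ∀ i, D (v i) = 0)
    (hli : LinearIndependent k v) : LinearIndependent K v := by
  classical
  have hδ1 : δ 1 = 0 := by
    have h := hδ_mul 1 1
    rw [one_mul, one_mul, mul_one] at h
    exact (left_eq_add.mp h)
  rw [linearIndependent_iff']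
  intro s
  induction s using Finset.strongInduction with
  | _ s ih =>
    intro g hg i hi
    by_contra hgi
    set c : ι → K := fun j => (g i)⁻¹ * g j with hc
    have hci : c i = 1 := inv_mul_cancel₀ hgi
    have hcsum : ∑ j ∈ s, c j • v j = 0 := by
      simp only [hc, mul_smul, ← Finset.smul_sum, hg, smul_zero]
    have hdsum : ∑ j ∈ s, δ (c j) • v j = 0 := by
      have h1 : D (∑ j ∈ s, c j • v j) = 0 := by
        rw [hcsum]; exact aux_D_zero D hadd
      rw [aux_D_sum D hadd] at h1
      calc ∑ j ∈ s, δ (c j) • v j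
          = ∑ j ∈ s, D (c j • v j) := Finset.sum_congr rfl fun j _ => by
            rw [hsmul, hv, smul_zero, add_zero]
        _ = 0 := h1
    have hzero : ∀ j ∈ s, δ (c j) = 0 := by
      intro j hj
      by_cases hji : j = i
      · subst hji; rw [hci, hδ1]
      · have herase : ∑ j ∈ s.erase i, δ (c j) • v j = 0 := by
          rw [← Finset.add_sum_erase s _ hi] at hdsum
          rwa [hci, hδ1, zero_smul, zero_add] at hdsum
        exact ih (s.erase i) (Finset.erase_ssubset hi) _ herase j
          (Finset.mem_erase.mpr ⟨hji, hj⟩)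
    set ck : ι → k := fun j =>
      if h : j ∈ s then ⟨c j, (hk _).mpr (hzero j h)⟩ else 0 with hck
    have hcks : ∑ j ∈ s, ck j • v j = 0 := by
      rw [← hcsum]
      refine Finset.sum_congr rfl fun j hj => ?_
      simp only [hck, dif_pos hj]
      rw [Subfield.smul_def]
    have hcki := linearIndependent_iff'.mp hli s ck hcks i hi
    simp only [hck, dif_pos hi] at hcki
    have hci0 : c i = 0 := congrArg Subtype.val hcki
    rw [hci] at hci0
    exact one_ne_zero hci0

theorem aux_sol_span {K V : Type*} [Field K] [AddCommGroup V] [Module K V]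
    {ι : Type*} [Fintype ι]
    (δ : K → K) (k : Subfield K) (hk : ∀ c, c ∈ k ↔ δ c = 0)
    (D : V → V) (hadd : ∀ x y, D (x + y) = D x + D y)
    (hsmul : ∀ (c : K) (x : V), D (c • x) = δ c • x + c • D x)
    (B : Module.Basis ι K V) (hB : ∀ i, D (B i) = 0)
    (x : V) (hx : D x = 0) : x ∈ Submodule.span k (Set.range (B : ι → V)) := by
  classical
  have hrepr := B.sum_repr x
  have hDx : ∑ i, δ (B.repr x i) • B i = 0 := by
    calc ∑ i, δ (B.repr x i) • B i
        = ∑ i, D (B.repr x i • B i) := Finset.sum_congr rfl fun i _ => by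
          rw [hsmul, hB, smul_zero, add_zero]
      _ = D (∑ i, B.repr x i • B i) := (aux_D_sum D hadd _ _).symm
      _ = 0 := by rw [hrepr, hx]
  have hzero : ∀ i, δ (B.repr x i) = 0 := fun i =>
    linearIndependent_iff'.mp B.linearIndependent Finset.univ _ hDx i (Finset.mem_univ i)
  rw [← hrepr]
  refine Submodule.sum_mem _ fun i _ => ?_
  have h1 : (⟨B.repr x i, (hk _).mpr (hzero i)⟩ : k) • B i = B.repr x i • B i := by
    rw [Subfield.smul_def]
  rw [← h1]
  exact Submodule.smul_mem _ _ (Submodule.subset_span ⟨i, rfl⟩)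

theorem aux_fd {K 𝕂 M : Type*} [Field K] [Field 𝕂] [Algebra 𝕂 K]
    [AddCommGroup M] [Module 𝕂 M] [FiniteDimensional 𝕂 M]
    (k : Subfield K) (SM : Submodule k (K ⊗[𝕂] M))
    (hfull : Module.finrank k SM = Module.finrank 𝕂 M) :
    FiniteDimensional k SM := by
  rcases Nat.eq_zero_or_pos (Module.finrank 𝕂 M) with h0 | hpos
  · have hsub : Subsingleton M := Module.finrank_zero_iff.mp h0
    have hz : ∀ x : K ⊗[𝕂] M, x = 0 := by
      intro x
      induction x using TensorProduct.induction_on with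
      | zero => rfl
      | tmul f m => rw [Subsingleton.elim m 0, tmul_zero]
      | add x y hx hy => rw [hx, hy, add_zero]
    have hsub2 : Subsingleton (K ⊗[𝕂] M) := ⟨fun a b => (hz a).trans (hz b).symm⟩
    have : Subsingleton SM := ⟨fun a b => Subtype.ext (Subsingleton.elim _ _)⟩
    infer_instance
  · exact FiniteDimensional.of_finrank_pos (by rw [hfull]; exact hpos)

theorem aux_li_sub {R V : Type*} [Field R] [AddCommGroup V] [Module R V] (S : Submodule R V)
    {ι : Type*} (b : Module.Basis ι R S) : LinearIndependent R (fun i => (b i : V)) :=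
  b.linearIndependent.map' S.subtype S.ker_subtype

end Aux

/-- with `K/𝕂`, `δ`, constants `k` as usual, if `M, N` are differential
`𝕂`-modules with full solution spaces, and `M ⊗ N` carries the structure
`D(m ⊗ n) = Dm ⊗ n + m ⊗ Dn`, then the canonical `k`-linear map
`Sol(M) ⊗_k Sol(N) → K ⊗ (M ⊗ N)` induced by `(f ⊗ m) ⊗ (g ⊗ n) ↦ fg ⊗ (m ⊗ n)`
is injective with image exactly `Sol(M ⊗ N)`; in particular
`Sol(M) ⊗_k Sol(N) ≅ Sol(M ⊗ N)` and `M ⊗ N` has a full solution space. -/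
theorem stmt_5 {K 𝕂 : Type*} [Field K] [Field 𝕂] [Algebra 𝕂 K] [CharZero K]
    (δ : K → K)
    (hδ_add : ∀ a b : K, δ (a + b) = δ a + δ b)
    (hδ_leibniz : ∀ a b : K, δ (a * b) = δ a * b + a * δ b)
    (δ𝕂 : 𝕂 → 𝕂)
    (hcompat : ∀ a : 𝕂, δ (algebraMap 𝕂 K a) = algebraMap 𝕂 K (δ𝕂 a))
    (k : Subfield K) (hk : ∀ c : K, c ∈ k ↔ δ c = 0)
    -- the differential modules M, N over 𝕂
    {M N : Type*}
    [AddCommGroup M] [Module 𝕂 M] [FiniteDimensional 𝕂 M]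
    [AddCommGroup N] [Module 𝕂 N] [FiniteDimensional 𝕂 N]
    (DM : M → M) (hDM_add : ∀ x y : M, DM (x + y) = DM x + DM y)
    (hDM : ∀ (a : 𝕂) (x : M), DM (a • x) = δ𝕂 a • x + a • DM x)
    (DN : N → N) (hDN_add : ∀ x y : N, DN (x + y) = DN x + DN y)
    (hDN : ∀ (a : 𝕂) (x : N), DN (a • x) = δ𝕂 a • x + a • DN x)
    -- the differential structure on M ⊗ N
    (DMN : M ⊗[𝕂] N → M ⊗[𝕂] N)
    (hDMN_add : ∀ x y, DMN (x + y) = DMN x + DMN y)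
    (hDMN : ∀ (m : M) (n : N), DMN (m ⊗ₜ[𝕂] n) = DM m ⊗ₜ[𝕂] n + m ⊗ₜ[𝕂] DN n)
    -- the operators D_K
    (DKM : K ⊗[𝕂] M → K ⊗[𝕂] M)
    (hDKM_add : ∀ x y, DKM (x + y) = DKM x + DKM y)
    (hDKM : ∀ (c : K) (x : M), DKM (c ⊗ₜ[𝕂] x) = δ c ⊗ₜ[𝕂] x + c ⊗ₜ[𝕂] DM x)
    (DKN : K ⊗[𝕂] N → K ⊗[𝕂] N)
    (hDKN_add : ∀ x y, DKN (x + y) = DKN x + DKN y)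
    (hDKN : ∀ (c : K) (x : N), DKN (c ⊗ₜ[𝕂] x) = δ c ⊗ₜ[𝕂] x + c ⊗ₜ[𝕂] DN x)
    (DKMN : K ⊗[𝕂] (M ⊗[𝕂] N) → K ⊗[𝕂] (M ⊗[𝕂] N))
    (hDKMN_add : ∀ x y, DKMN (x + y) = DKMN x + DKMN y)
    (hDKMN : ∀ (c : K) (x : M ⊗[𝕂] N), DKMN (c ⊗ₜ[𝕂] x) = δ c ⊗ₜ[𝕂] x + c ⊗ₜ[𝕂] DMN x)
    -- the solution spaces, as k-vector spaces
    (SM : Submodule k (K ⊗[𝕂] M)) (hSM : ∀ x, x ∈ SM ↔ DKM x = 0)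
    (SN : Submodule k (K ⊗[𝕂] N)) (hSN : ∀ x, x ∈ SN ↔ DKN x = 0)
    (SMN : Submodule k (K ⊗[𝕂] (M ⊗[𝕂] N))) (hSMN : ∀ x, x ∈ SMN ↔ DKMN x = 0)
    -- M and N have full solution spaces
    (hfullM : Module.finrank k SM = Module.finrank 𝕂 M)
    (hfullN : Module.finrank k SN = Module.finrank 𝕂 N)
    -- the canonical k-linear map (K ⊗ M) ⊗_k (K ⊗ N) → K ⊗ (M ⊗ N),
    -- (f ⊗ m) ⊗ (g ⊗ n) ↦ fg ⊗ (m ⊗ n)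
    (Φ : (K ⊗[𝕂] M) ⊗[k] (K ⊗[𝕂] N) →ₗ[k] K ⊗[𝕂] (M ⊗[𝕂] N))
    (hΦ : ∀ (f g : K) (m : M) (n : N),
      Φ ((f ⊗ₜ[𝕂] m) ⊗ₜ[k] (g ⊗ₜ[𝕂] n)) = (f * g) ⊗ₜ[𝕂] (m ⊗ₜ[𝕂] n)) :
    Function.Injective (Φ ∘ₗ TensorProduct.map SM.subtype SN.subtype) ∧
    LinearMap.range (Φ ∘ₗ TensorProduct.map SM.subtype SN.subtype) = SMN ∧
    Nonempty ((SM ⊗[k] SN) ≃ₗ[k] SMN) ∧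
    Module.finrank k SMN = Module.finrank 𝕂 (M ⊗[𝕂] N) := by
  classical
  have hDKM0 : DKM 0 = 0 := aux_D_zero DKM hDKM_add
  have hDKN0 : DKN 0 = 0 := aux_D_zero DKN hDKN_add
  have hDKMN0 : DKMN 0 = 0 := aux_D_zero DKMN hDKMN_add
  have hDKMs : ∀ (c : K) x, DKM (c • x) = δ c • x + c • DKM x :=
    aux_DK_smul δ hδ_leibniz DM DKM hDKM_add hDKM
  have hDKNs : ∀ (c : K) x, DKN (c • x) = δ c • x + c • DKN x :=
    aux_DK_smul δ hδ_leibniz DN DKN hDKN_add hDKN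
  have hDKMNs : ∀ (c : K) x, DKMN (c • x) = δ c • x + c • DKMN x :=
    aux_DK_smul δ hδ_leibniz DMN DKMN hDKMN_add hDKMN
  haveI fdSM : FiniteDimensional k SM := aux_fd k SM hfullM
  haveI fdSN : FiniteDimensional k SN := aux_fd k SN hfullN
  -- k-bases of the solution spaces
  haveI : Module.Free k SM := Module.Free.of_divisionRing k SM
  haveI : Module.Free k SN := Module.Free.of_divisionRing k SN
  let bSM := Module.finBasis k SM
  let bSN := Module.finBasis k SN
  set eK : Fin (Module.finrank k SM) → K ⊗[𝕂] M := fun i => (bSM i : K ⊗[𝕂] M) with heK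
  set fK : Fin (Module.finrank k SN) → K ⊗[𝕂] N := fun j => (bSN j : K ⊗[𝕂] N) with hfK
  have heKli : LinearIndependent k eK :=
    aux_li_sub SM bSM
  have hfKli : LinearIndependent k fK :=
    aux_li_sub SN bSN
  have heKsol : ∀ i, DKM (eK i) = 0 := fun i => (hSM _).mp (bSM i).2
  have hfKsol : ∀ j, DKN (fK j) = 0 := fun j => (hSN _).mp (bSN j).2
  have heKliK : LinearIndependent K eK :=
    aux_wronskian δ hδ_leibniz k hk DKM hDKM_add hDKMs eK heKsol heKli
  have hfKliK : LinearIndependent K fK :=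
    aux_wronskian δ hδ_leibniz k hk DKN hDKN_add hDKNs fK hfKsol hfKli
  -- eK, fK are K-bases of K ⊗ M, K ⊗ N
  have hBMtop : Submodule.span K (Set.range eK) = ⊤ := by
    apply Submodule.eq_top_of_finrank_eq
    rw [finrank_span_eq_card heKliK, Fintype.card_fin, hfullM, Module.finrank_baseChange]
  have hBNtop : Submodule.span K (Set.range fK) = ⊤ := by
    apply Submodule.eq_top_of_finrank_eq
    rw [finrank_span_eq_card hfKliK, Fintype.card_fin, hfullN, Module.finrank_baseChange]
  let BM : Module.Basis (Fin (Module.finrank k SM)) K (K ⊗[𝕂] M) := Module.Basis.mk heKliK hBMtop.ge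
  let BN : Module.Basis (Fin (Module.finrank k SN)) K (K ⊗[𝕂] N) := Module.Basis.mk hfKliK hBNtop.ge
  -- the canonical K-linear iso
  let ψ : ((K ⊗[𝕂] M) ⊗[K] (K ⊗[𝕂] N)) ≃ₗ[K] K ⊗[𝕂] (M ⊗[𝕂] N) :=
    (TensorProduct.AlgebraTensorModule.tensorTensorTensorComm 𝕂 𝕂 K K K M K N).trans
      (TensorProduct.AlgebraTensorModule.congr (TensorProduct.lid K K)
        (LinearEquiv.refl 𝕂 (M ⊗[𝕂] N)))
  have hψ : ∀ (f g : K) (m : M) (n : N),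
      ψ ((f ⊗ₜ[𝕂] m) ⊗ₜ[K] (g ⊗ₜ[𝕂] n)) = (f * g) ⊗ₜ[𝕂] (m ⊗ₜ[𝕂] n) := by
    intro f g m n
    simp [ψ, TensorProduct.AlgebraTensorModule.congr_tmul, smul_eq_mul]
  have hψΦ : ∀ (x : K ⊗[𝕂] M) (y : K ⊗[𝕂] N), ψ (x ⊗ₜ[K] y) = Φ (x ⊗ₜ[k] y) := by
    intro x y
    induction x using TensorProduct.induction_on with
    | zero => simp
    | add x1 x2 h1 h2 => rw [add_tmul, add_tmul, map_add, map_add, h1, h2]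
    | tmul f m =>
      induction y using TensorProduct.induction_on with
      | zero => simp
      | add y1 y2 h1 h2 => rw [tmul_add, tmul_add, map_add, map_add, h1, h2]
      | tmul g n => rw [hψ, hΦ]
  -- Leibniz rule for Φ
  have hΦD : ∀ (x : K ⊗[𝕂] M) (y : K ⊗[𝕂] N),
      DKMN (Φ (x ⊗ₜ[k] y)) = Φ (DKM x ⊗ₜ[k] y) + Φ (x ⊗ₜ[k] DKN y) := by
    intro x y
    induction x using TensorProduct.induction_on with
    | zero => simp [hDKM0, hDKMN0]
    | add x1 x2 h1 h2 =>
      rw [add_tmul, map_add, hDKMN_add, h1, h2, hDKM_add, add_tmul, map_add,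
        add_tmul, map_add]
      abel
    | tmul f m =>
      induction y using TensorProduct.induction_on with
      | zero => simp [hDKN0, hDKMN0]
      | add y1 y2 h1 h2 =>
        rw [tmul_add, map_add, hDKMN_add, h1, h2, hDKN_add, tmul_add, map_add,
          tmul_add, map_add]
        abel
      | tmul g n =>
        rw [hΦ, hDKMN, hDMN, hDKM, hDKN, add_tmul (δ f ⊗ₜ[𝕂] m), map_add,
          tmul_add (f ⊗ₜ[𝕂] m), map_add, hΦ, hΦ, hΦ, hΦ, hδ_leibniz,
          tmul_add ((f : K) * g), add_tmul (δ f * g)]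
        abel
  -- the family G
  set G : Fin (Module.finrank k SM) × Fin (Module.finrank k SN) → K ⊗[𝕂] (M ⊗[𝕂] N) :=
    fun p => Φ ((eK p.1) ⊗ₜ[k] (fK p.2)) with hG
  let Bbig : Module.Basis _ K (K ⊗[𝕂] (M ⊗[𝕂] N)) := (BM.tensorProduct BN).map ψ
  have hcoe : ⇑Bbig = G := by
    funext p
    rcases p with ⟨i, j⟩
    show ψ ((BM.tensorProduct BN) (i, j)) = G (i, j)
    rw [Module.Basis.tensorProduct_apply]
    have hBM : BM i = eK i := Module.Basis.mk_apply heKliK hBMtop.ge i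
    have hBN : BN j = fK j := Module.Basis.mk_apply hfKliK hBNtop.ge j
    rw [hBM, hBN, hψΦ]
  have hGsol : ∀ p, DKMN (G p) = 0 := by
    intro p
    rw [hG]
    show DKMN (Φ (eK p.1 ⊗ₜ[k] fK p.2)) = 0
    rw [hΦD (eK p.1) (fK p.2), heKsol p.1, hfKsol p.2]
    simp
  have hGliK : LinearIndependent K G := hcoe ▸ Bbig.linearIndependent
  have hGlik : LinearIndependent k G := by
    apply hGliK.restrict_scalars
    intro a b h
    apply Subtype.ext
    simpa [Subfield.smul_def] using h
  -- SMN is the k-span of G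
  have hSMNspan : SMN = Submodule.span k (Set.range G) := by
    apply le_antisymm
    · intro x hx
      have hx0 : DKMN x = 0 := (hSMN x).mp hx
      have hmem := aux_sol_span δ k hk DKMN hDKMN_add hDKMNs Bbig
        (fun p => by rw [hcoe]; exact hGsol p) x hx0
      rwa [hcoe] at hmem
    · rw [Submodule.span_le]
      rintro _ ⟨p, rfl⟩
      exact (hSMN _).mpr (hGsol p)
  -- the map F
  set F := Φ ∘ₗ TensorProduct.map SM.subtype SN.subtype with hF
  let b : Module.Basis _ k (↥SM ⊗[k] ↥SN) := bSM.tensorProduct bSN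
  have hFb : ∀ p, F (b p) = G p := by
    rintro ⟨i, j⟩
    show Φ (TensorProduct.map SM.subtype SN.subtype ((bSM.tensorProduct bSN) (i, j))) = G (i, j)
    rw [Module.Basis.tensorProduct_apply, TensorProduct.map_tmul]
    rfl
  have hFbcoe : ⇑F ∘ ⇑b = G := funext hFb
  have hker : ∀ x, F x = 0 → x = 0 := by
    intro x hx
    have h1 : Finsupp.linearCombination k G (b.repr x) = 0 := by
      have h2 := Finsupp.apply_linearCombination k F ⇑b (b.repr x)
      rw [b.linearCombination_repr, hx, hFbcoe] at h2
      exact h2.symm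
    have h3 := linearIndependent_iff.mp hGlik _ h1
    have h4 : x = Finsupp.linearCombination k ⇑b (b.repr x) :=
      (b.linearCombination_repr x).symm
    rw [h3, map_zero] at h4
    exact h4
  have hinj : Function.Injective F := by
    intro x y hxy
    have e : ∀ z, F z = Finsupp.linearCombination k G (b.repr z) := fun z => by
      have h2 := Finsupp.apply_linearCombination k F ⇑b (b.repr z)
      rw [b.linearCombination_repr, hFbcoe] at h2
      exact h2
    rw [e, e] at hxy
    exact b.repr.injective (hGlik hxy)
  have hrange : LinearMap.range F = SMN := by
    rw [LinearMap.range_eq_map, ← b.span_eq, Submodule.map_span, ← Set.range_comp,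
      hFbcoe]
    exact hSMNspan.symm
  have e1 : (↥SM ⊗[k] ↥SN) ≃ₗ[k] SMN :=
    (LinearEquiv.ofInjective F hinj).trans (LinearEquiv.ofEq _ _ hrange)
  refine ⟨hinj, hrange, ⟨e1⟩, ?_⟩
  have h5 : Module.finrank k SMN
      = Fintype.card (Fin (Module.finrank k SM) × Fin (Module.finrank k SN)) :=
    Module.finrank_eq_card_basis (b.map e1)
  rw [h5, Fintype.card_prod, Fintype.card_fin, Fintype.card_fin, hfullM, hfullN,
    Module.finrank_tensorProduct]
end

section
/- Let M be a differential module over 𝕂 and give the dual space M* = Hom_𝕂(M, 𝕂) the differential module structure (D u)(m) := δ(u(m)) − u(D(m)). Identify K ⊗_𝕂 M* with the K-linear dual of K ⊗_𝕂 M in the natural way. Assume M has a full solution space. Then for every u ∈ Sol(M*) and v ∈ Sol(M) the pairing ⟨u, v⟩ lies in k, and the induced k-linear map Sol(M*) → Hom_k(Sol(M), k) is an isomorphism. -/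
open TensorProduct

universe u1 u2 u3

set_option synthInstance.maxHeartbeats 1000000
set_option maxHeartbeats 1600000


private lemma aux_indep {K : Type u1} [Field K] (δ : K → K) (hδ1 : δ 1 = 0)
    (k : Subfield K) (hk : ∀ c : K, c ∈ k ↔ δ c = 0)
    {V : Type u2} [AddCommGroup V] [Module K V]
    (DKM : V → V) (hDKM_add : ∀ x y, DKM (x + y) = DKM x + DKM y)
    (hDKM0 : DKM 0 = 0)
    (hDsmul : ∀ (c : K) (x : V), DKM (c • x) = δ c • x + c • DKM x)
    (SM : Submodule k V) (hSM : ∀ x, x ∈ SM ↔ DKM x = 0)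
    {ι : Type u3} (b : ι → SM) (hb : LinearIndependent k b) :
    LinearIndependent K (fun i => ((b i : V))) := by
  classical
  have key : ∀ (n : ℕ) (s : Finset ι) (c : ι → K), s.card ≤ n →
      ∑ i ∈ s, c i • (b i : V) = 0 → ∀ i ∈ s, c i = 0 := by
    intro n
    induction n with
    | zero =>
        intro s c hcard hsum i hi
        rw [Nat.le_zero, Finset.card_eq_zero] at hcard
        subst hcard
        exact absurd hi (Finset.notMem_empty i)
    | succ n ih =>
        intro s c hcard hsum i hi
        by_contra hci
        set d : ι → K := fun j => (c i)⁻¹ * c j with hd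
        have hdi : d i = 1 := inv_mul_cancel₀ hci
        have hd0 : ∑ j ∈ s, d j • (b j : V) = 0 := by
          have : ∑ j ∈ s, d j • (b j : V)
              = (c i)⁻¹ • ∑ j ∈ s, c j • (b j : V) := by
            rw [Finset.smul_sum]
            exact Finset.sum_congr rfl fun j _ => by rw [hd, smul_smul]
          rw [this, hsum, smul_zero]
        have h2 : ∑ j ∈ s, δ (d j) • (b j : V) = 0 := by
          have hmap : DKM (∑ j ∈ s, d j • (b j : V))
              = ∑ j ∈ s, DKM (d j • (b j : V)) :=
            map_sum (AddMonoidHom.mk' DKM hDKM_add) _ s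
          have h0 : ∑ j ∈ s, DKM (d j • (b j : V)) = 0 := by
            rw [← hmap, hd0, hDKM0]
          calc ∑ j ∈ s, δ (d j) • (b j : V)
              = ∑ j ∈ s, DKM (d j • (b j : V)) := by
                refine Finset.sum_congr rfl fun j _ => ?_
                rw [hDsmul, (hSM _).mp (b j).2, smul_zero, add_zero]
            _ = 0 := h0
        have h3 : ∑ j ∈ s.erase i, δ (d j) • (b j : V) = 0 := by
          rw [← Finset.sum_erase_add s _ hi, hdi, hδ1, zero_smul, add_zero] at h2
          exact h2
        have h4 : ∀ j ∈ s.erase i, δ (d j) = 0 := by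
          refine ih (s.erase i) _ ?_ h3
          have := Finset.card_erase_of_mem hi
          omega
        have h5 : ∀ j ∈ s, δ (d j) = 0 := by
          intro j hj
          by_cases hji : j = i
          · rw [hji, hdi, hδ1]
          · exact h4 j (Finset.mem_erase.mpr ⟨hji, hj⟩)
        set e : ι → k := fun j => if h : j ∈ s then ⟨d j, (hk _).mpr (h5 j h)⟩ else 0
          with he
        have h6 : ∑ j ∈ s, e j • b j = 0 := by
          have hcoe : ((∑ j ∈ s, e j • b j : SM) : V)
              = ∑ j ∈ s, d j • (b j : V) := by
            push_cast
            refine Finset.sum_congr rfl fun j hj => ?_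
            have : e j = ⟨d j, (hk _).mpr (h5 j hj)⟩ := by rw [he]; simp [hj]
            rw [this]
            rfl
          exact Subtype.ext (by rw [hcoe, hd0]; rfl)
        have h7 := linearIndependent_iff'.mp hb s e h6 i hi
        have hd00 : d i = 0 := by
          have : e i = ⟨d i, (hk _).mpr (h5 i hi)⟩ := by rw [he]; simp [hi]
          rw [this] at h7
          exact congrArg Subtype.val h7
        rw [hdi] at hd00
        exact one_ne_zero hd00
  exact linearIndependent_iff'.mpr fun s c hsum i hi => key s.card s c le_rfl hsum i hi

/-- with `K/𝕂`, `δ`, constants `k` as usual, let `M` be a differential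
`𝕂`-module with full solution space and give `M* = Hom_𝕂(M,𝕂)` the structure
`(Du)(m) = δ(u(m)) - u(D m)`. Identifying `K ⊗ M*` with the `K`-dual of `K ⊗ M` via the
natural pairing `Φ`, every `u ∈ Sol(M*)` pairs `Sol(M)` into the constants `k`, and the
induced `k`-linear map `Sol(M*) → Hom_k(Sol(M), k)` is an isomorphism. -/
theorem stmt_7 {K 𝕂 : Type*} [Field K] [Field 𝕂] [Algebra 𝕂 K] [CharZero K]
    (δ : K → K)
    (hδ_add : ∀ a b : K, δ (a + b) = δ a + δ b)
    (hδ_leibniz : ∀ a b : K, δ (a * b) = δ a * b + a * δ b)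
    (δ𝕂 : 𝕂 → 𝕂)
    (hcompat : ∀ a : 𝕂, δ (algebraMap 𝕂 K a) = algebraMap 𝕂 K (δ𝕂 a))
    (k : Subfield K) (hk : ∀ c : K, c ∈ k ↔ δ c = 0)
    -- the differential module M over 𝕂
    {M : Type*} [AddCommGroup M] [Module 𝕂 M] [FiniteDimensional 𝕂 M]
    (DM : M → M) (hDM_add : ∀ x y : M, DM (x + y) = DM x + DM y)
    (hDM : ∀ (a : 𝕂) (x : M), DM (a • x) = δ𝕂 a • x + a • DM x)
    -- the differential structure on the dual module M* = Hom_𝕂(M, 𝕂)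
    (Dd : Module.Dual 𝕂 M → Module.Dual 𝕂 M)
    (hDd_add : ∀ u v, Dd (u + v) = Dd u + Dd v)
    (hDd : ∀ (u : Module.Dual 𝕂 M) (m : M), Dd u m = δ𝕂 (u m) - u (DM m))
    -- the operators D_K on K ⊗ M and K ⊗ M*
    (DKM : K ⊗[𝕂] M → K ⊗[𝕂] M)
    (hDKM_add : ∀ x y, DKM (x + y) = DKM x + DKM y)
    (hDKM : ∀ (c : K) (x : M), DKM (c ⊗ₜ[𝕂] x) = δ c ⊗ₜ[𝕂] x + c ⊗ₜ[𝕂] DM x)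
    (DKd : K ⊗[𝕂] Module.Dual 𝕂 M → K ⊗[𝕂] Module.Dual 𝕂 M)
    (hDKd_add : ∀ x y, DKd (x + y) = DKd x + DKd y)
    (hDKd : ∀ (c : K) (u : Module.Dual 𝕂 M), DKd (c ⊗ₜ[𝕂] u) = δ c ⊗ₜ[𝕂] u + c ⊗ₜ[𝕂] Dd u)
    -- the natural identification of K ⊗ M* with the K-linear dual of K ⊗ M
    (Φ : K ⊗[𝕂] Module.Dual 𝕂 M →ₗ[K] Module.Dual K (K ⊗[𝕂] M))
    (hΦ : ∀ (f g : K) (u : Module.Dual 𝕂 M) (m : M),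
      Φ (f ⊗ₜ[𝕂] u) (g ⊗ₜ[𝕂] m) = f * g * algebraMap 𝕂 K (u m))
    (hΦ_bij : Function.Bijective Φ)
    -- the solution spaces
    (SM : Submodule k (K ⊗[𝕂] M)) (hSM : ∀ x, x ∈ SM ↔ DKM x = 0)
    (Sd : Submodule k (K ⊗[𝕂] Module.Dual 𝕂 M)) (hSd : ∀ x, x ∈ Sd ↔ DKd x = 0)
    -- M has a full solution space
    (hfullM : Module.finrank k SM = Module.finrank 𝕂 M) :
    -- the pairing of solutions has constant values ...
    (∀ u ∈ Sd, ∀ v ∈ SM, Φ u v ∈ k) ∧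
    -- ... and the induced k-linear map Sol(M*) → Hom_k(Sol(M), k) is bijective
    (∀ u ∈ Sd, (∀ v ∈ SM, Φ u v = 0) → u = 0) ∧
    (∀ L : SM →ₗ[k] k, ∃ u ∈ Sd, ∀ (v : K ⊗[𝕂] M) (hv : v ∈ SM),
      Φ u v = (L ⟨v, hv⟩ : K)) := by
  classical
  -- basic consequences of additivity
  have hδ0 : δ 0 = 0 := by
    have h := hδ_add 0 0
    rw [add_zero] at h
    exact (left_eq_add.mp h)
  have hδ1 : δ 1 = 0 := by
    have h := hδ_leibniz 1 1
    simp only [mul_one, one_mul] at h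
    exact (left_eq_add.mp h)
  have hDKM0 : DKM 0 = 0 := by
    have h := hDKM_add 0 0
    rw [add_zero] at h
    exact (left_eq_add.mp h)
  have hDKd0 : DKd 0 = 0 := by
    have h := hDKd_add 0 0
    rw [add_zero] at h
    exact (left_eq_add.mp h)
  -- DKM is K-semilinear Leibniz
  have hDsmul : ∀ (c : K) (x : K ⊗[𝕂] M), DKM (c • x) = δ c • x + c • DKM x := by
    intro c x
    induction x using TensorProduct.induction_on with
    | zero => simp [hDKM0]
    | tmul g m =>
        rw [TensorProduct.smul_tmul', smul_eq_mul, hDKM, hδ_leibniz, hDKM,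
          TensorProduct.add_tmul, smul_add, TensorProduct.smul_tmul',
          TensorProduct.smul_tmul', TensorProduct.smul_tmul', smul_eq_mul, smul_eq_mul,
          smul_eq_mul]
        abel
    | add x y ihx ihy =>
        simp only [smul_add, hDKM_add, ihx, ihy]
        abel
  -- Leibniz rule for the pairing
  have hLeib : ∀ (x : K ⊗[𝕂] Module.Dual 𝕂 M) (v : K ⊗[𝕂] M),
      δ (Φ x v) = Φ (DKd x) v + Φ x (DKM v) := by
    intro x v
    induction x using TensorProduct.induction_on with
    | zero => simp [hDKd0, hδ0]
    | tmul f u =>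
        induction v using TensorProduct.induction_on with
        | zero => simp [hDKM0, hδ0]
        | tmul g m =>
            rw [hΦ, hDKd, hDKM, map_add, LinearMap.add_apply, map_add, hΦ, hΦ, hΦ, hΦ]
            rw [hδ_leibniz, hδ_leibniz, hcompat, hDd, map_sub]
            ring
        | add v₁ v₂ ih₁ ih₂ =>
            rw [map_add, hδ_add, ih₁, ih₂, hDKM_add, map_add, map_add]
            abel
    | add x₁ x₂ ih₁ ih₂ =>
        simp only [hDKd_add, map_add, LinearMap.add_apply, hδ_add, ih₁, ih₂]
        abel
  -- claim 1: constancy of the pairing of solutions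
  have claim1 : ∀ u ∈ Sd, ∀ v ∈ SM, Φ u v ∈ k := by
    intro u hu v hv
    rw [hk]
    rw [hLeib u v, (hSd u).mp hu, (hSM v).mp hv]
    simp
  -- SM is finite dimensional over k, and its basis gives a K-basis of K ⊗ M
  have hfinKM : FiniteDimensional K (K ⊗[𝕂] M) := inferInstance
  have hfinSM : FiniteDimensional k SM := by
    set b0 := Module.Basis.ofVectorSpace k SM
    have hI : LinearIndependent K (fun i => ((b0 i : K ⊗[𝕂] M))) := by
      exact aux_indep δ hδ1 k hk DKM hDKM_add hDKM0 hDsmul SM hSM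
        (fun i : Module.Basis.ofVectorSpaceIndex k SM => b0 i) b0.linearIndependent
    have : Finite (Module.Basis.ofVectorSpaceIndex k SM) := hI.finite
    exact Module.Basis.finiteDimensional_of_finite b0
  haveI : Module.Free k SM := Module.Free.of_divisionRing k SM
  set b : Module.Basis (Fin (Module.finrank k SM)) k SM := Module.finBasis k SM with hbdef
  have hw : LinearIndependent K (fun i => ((b i : K ⊗[𝕂] M))) :=
    aux_indep δ hδ1 k hk DKM hDKM_add hDKM0 hDsmul SM hSM b b.linearIndependent
  have hcard : Fintype.card (Fin (Module.finrank k SM)) = Module.finrank K (K ⊗[𝕂] M) := by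
    rw [Fintype.card_fin, hfullM, Module.finrank_baseChange]
  set B : Module.Basis (Fin (Module.finrank k SM)) K (K ⊗[𝕂] M) :=
    Module.Basis.mk hw (hw.span_eq_top_of_card_eq_finrank' hcard).ge with hBdef
  have hB : ∀ i, B i = ((b i : K ⊗[𝕂] M)) := fun i => by
    rw [hBdef, Module.Basis.mk_apply]
  -- claim 2: injectivity
  have claim2 : ∀ u ∈ Sd, (∀ v ∈ SM, Φ u v = 0) → u = 0 := by
    intro u _ h0
    have hΦu : Φ u = 0 := B.ext fun i => by
      rw [hB i, LinearMap.zero_apply]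
      exact h0 _ (b i).2
    apply hΦ_bij.1
    rw [hΦu, map_zero]
  refine ⟨claim1, claim2, ?_⟩
  -- claim 3: surjectivity
  intro L
  set g : Fin (Module.finrank k SM) → K := fun i => ((L (b i) : k) : K) with hg
  set F : (K ⊗[𝕂] M) →ₗ[K] K := B.constr ℕ g with hF
  obtain ⟨u, hu⟩ := hΦ_bij.2 F
  have huB : ∀ i, Φ u ((b i : K ⊗[𝕂] M)) = g i := fun i => by
    rw [← hB i, hu, hF, Module.Basis.constr_basis]
  have hu_sol : DKd u = 0 := by
    apply hΦ_bij.1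
    rw [map_zero]
    refine B.ext fun i => ?_
    have hL := hLeib u (B i)
    rw [hB i] at hL
    rw [(hSM _).mp (b i).2, map_zero, add_zero, huB i] at hL
    have : δ (g i) = 0 := (hk _).mp (L (b i)).2
    rw [this] at hL
    rw [hB i, ← hL, LinearMap.zero_apply]
  refine ⟨u, (hSd u).mpr hu_sol, ?_⟩
  -- two k-linear maps SM → K agreeing on the basis b
  set map1 : SM →ₗ[k] K :=
    { toFun := fun v => Φ u (v : K ⊗[𝕂] M)
      map_add' := by intro v w; push_cast; rw [map_add]
      map_smul' := by
        intro c v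
        show Φ u ((c • v : SM) : K ⊗[𝕂] M) = c • Φ u (v : K ⊗[𝕂] M)
        rw [Submodule.coe_smul]
        show Φ u ((c : K) • (v : K ⊗[𝕂] M)) = c • Φ u (v : K ⊗[𝕂] M)
        rw [map_smul]
        rfl } with hmap1
  set map2 : SM →ₗ[k] K :=
    { toFun := fun v => ((L v : k) : K)
      map_add' := by
        intro v w
        show ((L (v + w) : k) : K) = ((L v : k) : K) + ((L w : k) : K)
        rw [map_add]; push_cast; ring
      map_smul' := by
        intro c v
        show ((L (c • v) : k) : K) = c • ((L v : k) : K)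
        rw [map_smul]
        push_cast
        rfl } with hmap2
  have hmaps : map1 = map2 := by
    refine b.ext fun i => ?_
    show Φ u ((b i : K ⊗[𝕂] M)) = ((L (b i) : k) : K)
    rw [huB i]
  intro v hv
  have := LinearMap.congr_fun hmaps ⟨v, hv⟩
  exact this
end

section
/- Let M and N be differential modules over 𝕂 and give Hom_𝕂(M, N) the differential module structure D(φ) := D_N ∘ φ − φ ∘ D_M. Identify K ⊗_𝕂 Hom_𝕂(M,N) with Hom_K(K ⊗_𝕂 M, K ⊗_𝕂 N) in the natural way. Assume M and N have full solution spaces. Then every element of Sol(Hom_𝕂(M,N)), viewed as a K-linear map K ⊗_𝕂 M → K ⊗_𝕂 N, commutes with the operators D_K and maps Sol(M) into Sol(N), and the resulting k-linear map Sol(Hom_𝕂(M,N)) → Hom_k(Sol(M), Sol(N)) is an isomorphism. -/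
open TensorProduct

set_option synthInstance.maxHeartbeats 1000000
set_option maxHeartbeats 1600000

private lemma addhom_zero' {V W : Type*} [AddCommGroup V] [AddCommGroup W] (D : V → W)
    (h : ∀ x y, D (x + y) = D x + D y) : D 0 = 0 := by
  have h0 := h 0 0
  rw [add_zero] at h0
  exact (left_eq_add.mp h0)

private lemma wronskian_indep' {K : Type*} [Field K] (δ : K → K)
    (hδ_leibniz : ∀ a b : K, δ (a * b) = δ a * b + a * δ b)
    (k : Subfield K) (hk : ∀ c : K, c ∈ k ↔ δ c = 0)
    {V : Type*} [AddCommGroup V] [Module K V]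
    (D : V → V) (hD_add : ∀ x y, D (x + y) = D x + D y)
    (hD_smul : ∀ (a : K) (x : V), D (a • x) = δ a • x + a • D x)
    {ι : Type*} (v : ι → V) (hv : ∀ i, D (v i) = 0)
    (hindep : LinearIndependent k v) : LinearIndependent K v := by
  have hδ1 : δ 1 = 0 := by
    have h1 : δ 1 = δ 1 + δ 1 := by simpa using hδ_leibniz 1 1
    exact (left_eq_add.mp h1)
  classical
  rw [linearIndependent_iff'] at hindep ⊢
  intro s
  induction s using Finset.strongInduction with
  | _ s ih =>
    intro g hg i hi
    by_contra hgi
    set b : ι → K := fun j => (g i)⁻¹ * g j with hb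
    have hbrel : ∑ j ∈ s, b j • v j = 0 := by
      have h2 : ∑ j ∈ s, b j • v j = (g i)⁻¹ • ∑ j ∈ s, g j • v j := by
        rw [Finset.smul_sum]
        exact Finset.sum_congr rfl fun j _ => (mul_smul _ _ _)
      rw [h2, hg, smul_zero]
    have hbi : b i = 1 := inv_mul_cancel₀ hgi
    have hDsum : ∑ j ∈ s, δ (b j) • v j = 0 := by
      have hmap : D (∑ j ∈ s, b j • v j) = ∑ j ∈ s, D (b j • v j) :=
        map_sum (AddMonoidHom.mk' D hD_add) _ s
      rw [hbrel, addhom_zero' D hD_add] at hmap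
      have h3 : ∑ j ∈ s, D (b j • v j) = ∑ j ∈ s, δ (b j) • v j :=
        Finset.sum_congr rfl fun j _ => by rw [hD_smul, hv, smul_zero, add_zero]
      rw [h3] at hmap
      exact hmap.symm
    have hδbi : δ (b i) = 0 := by rw [hbi]; exact hδ1
    have herase : ∑ j ∈ s.erase i, δ (b j) • v j = 0 := by
      rw [Finset.sum_erase s (by rw [hδbi, zero_smul])]
      exact hDsum
    have hall : ∀ j ∈ s, δ (b j) = 0 := by
      intro j hj
      rcases eq_or_ne j i with rfl | hne
      · exact hδbi
      · exact ih (s.erase i) (Finset.erase_ssubset hi) (fun j => δ (b j)) herase j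
          (Finset.mem_erase.mpr ⟨hne, hj⟩)
    set g' : ι → k := fun j => if h : b j ∈ k then ⟨b j, h⟩ else 0 with hg'
    have hrel' : ∑ j ∈ s, g' j • v j = 0 := by
      rw [← hbrel]
      refine Finset.sum_congr rfl fun j hj => ?_
      have hbk : b j ∈ k := (hk _).mpr (hall j hj)
      rw [hg']
      simp only [dif_pos hbk]
      rfl
    have hzero := hindep s g' hrel' i hi
    have hbk : b i ∈ k := (hk _).mpr hδbi
    rw [hg'] at hzero
    simp only [dif_pos hbk] at hzero
    have hbi0 : b i = 0 := congrArg Subtype.val hzero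
    rw [hbi] at hbi0
    exact one_ne_zero hbi0

/-- with `K/𝕂`, `δ`, constants `k` as usual, let `M, N` be differential
`𝕂`-modules with full solution spaces and give `Hom_𝕂(M,N)` the structure
`D(φ) = D_N ∘ φ - φ ∘ D_M`. Identifying `K ⊗ Hom_𝕂(M,N)` with `Hom_K(K ⊗ M, K ⊗ N)` via
the natural map `Φ`, every `h ∈ Sol(Hom_𝕂(M,N))` commutes with the operators `D_K` and maps
`Sol(M)` into `Sol(N)`, and the resulting `k`-linear map
`Sol(Hom_𝕂(M,N)) → Hom_k(Sol(M), Sol(N))` is an isomorphism. -/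
theorem stmt_8 {K 𝕂 : Type*} [Field K] [Field 𝕂] [Algebra 𝕂 K] [CharZero K]
    (δ : K → K)
    (hδ_add : ∀ a b : K, δ (a + b) = δ a + δ b)
    (hδ_leibniz : ∀ a b : K, δ (a * b) = δ a * b + a * δ b)
    (δ𝕂 : 𝕂 → 𝕂)
    (hcompat : ∀ a : 𝕂, δ (algebraMap 𝕂 K a) = algebraMap 𝕂 K (δ𝕂 a))
    (k : Subfield K) (hk : ∀ c : K, c ∈ k ↔ δ c = 0)
    -- the differential modules M, N over 𝕂
    {M N : Type*}
    [AddCommGroup M] [Module 𝕂 M] [FiniteDimensional 𝕂 M]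
    [AddCommGroup N] [Module 𝕂 N] [FiniteDimensional 𝕂 N]
    (DM : M → M) (hDM_add : ∀ x y : M, DM (x + y) = DM x + DM y)
    (hDM : ∀ (a : 𝕂) (x : M), DM (a • x) = δ𝕂 a • x + a • DM x)
    (DN : N → N) (hDN_add : ∀ x y : N, DN (x + y) = DN x + DN y)
    (hDN : ∀ (a : 𝕂) (x : N), DN (a • x) = δ𝕂 a • x + a • DN x)
    -- the differential structure on Hom_𝕂(M, N)
    (DH : (M →ₗ[𝕂] N) → (M →ₗ[𝕂] N))
    (hDH_add : ∀ φ ψ, DH (φ + ψ) = DH φ + DH ψ)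
    (hDH : ∀ (φ : M →ₗ[𝕂] N) (m : M), DH φ m = DN (φ m) - φ (DM m))
    -- the operators D_K on K ⊗ M, K ⊗ N, K ⊗ Hom_𝕂(M,N)
    (DKM : K ⊗[𝕂] M → K ⊗[𝕂] M)
    (hDKM_add : ∀ x y, DKM (x + y) = DKM x + DKM y)
    (hDKM : ∀ (c : K) (x : M), DKM (c ⊗ₜ[𝕂] x) = δ c ⊗ₜ[𝕂] x + c ⊗ₜ[𝕂] DM x)
    (DKN : K ⊗[𝕂] N → K ⊗[𝕂] N)
    (hDKN_add : ∀ x y, DKN (x + y) = DKN x + DKN y)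
    (hDKN : ∀ (c : K) (x : N), DKN (c ⊗ₜ[𝕂] x) = δ c ⊗ₜ[𝕂] x + c ⊗ₜ[𝕂] DN x)
    (DKH : K ⊗[𝕂] (M →ₗ[𝕂] N) → K ⊗[𝕂] (M →ₗ[𝕂] N))
    (hDKH_add : ∀ x y, DKH (x + y) = DKH x + DKH y)
    (hDKH : ∀ (c : K) (φ : M →ₗ[𝕂] N), DKH (c ⊗ₜ[𝕂] φ) = δ c ⊗ₜ[𝕂] φ + c ⊗ₜ[𝕂] DH φ)
    -- the natural identification K ⊗ Hom_𝕂(M,N) ≅ Hom_K(K ⊗ M, K ⊗ N)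
    (Φ : K ⊗[𝕂] (M →ₗ[𝕂] N) →ₗ[K] ((K ⊗[𝕂] M) →ₗ[K] (K ⊗[𝕂] N)))
    (hΦ : ∀ (f g : K) (φ : M →ₗ[𝕂] N) (m : M),
      Φ (f ⊗ₜ[𝕂] φ) (g ⊗ₜ[𝕂] m) = (f * g) ⊗ₜ[𝕂] φ m)
    (hΦ_bij : Function.Bijective Φ)
    -- the solution spaces
    (SM : Submodule k (K ⊗[𝕂] M)) (hSM : ∀ x, x ∈ SM ↔ DKM x = 0)
    (SN : Submodule k (K ⊗[𝕂] N)) (hSN : ∀ x, x ∈ SN ↔ DKN x = 0)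
    (SH : Submodule k (K ⊗[𝕂] (M →ₗ[𝕂] N))) (hSH : ∀ x, x ∈ SH ↔ DKH x = 0)
    -- M and N have full solution spaces
    (hfullM : Module.finrank k SM = Module.finrank 𝕂 M)
    (hfullN : Module.finrank k SN = Module.finrank 𝕂 N) :
    -- solutions commute with the D_K's ...
    (∀ h ∈ SH, ∀ x : K ⊗[𝕂] M, Φ h (DKM x) = DKN (Φ h x)) ∧
    -- ... map Sol(M) into Sol(N) ...
    (∀ h ∈ SH, ∀ v ∈ SM, Φ h v ∈ SN) ∧
    -- ... and the induced k-linear map Sol(Hom(M,N)) → Hom_k(Sol(M), Sol(N)) is bijective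
    (∀ h ∈ SH, (∀ v ∈ SM, Φ h v = 0) → h = 0) ∧
    (∀ L : SM →ₗ[k] SN, ∃ h ∈ SH, ∀ (v : K ⊗[𝕂] M) (hv : v ∈ SM),
      Φ h v = (L ⟨v, hv⟩ : K ⊗[𝕂] N)) := by
  have hDKM0 : DKM 0 = 0 := addhom_zero' DKM hDKM_add
  have hDKN0 : DKN 0 = 0 := addhom_zero' DKN hDKN_add
  have hDKH0 : DKH 0 = 0 := addhom_zero' DKH hDKH_add
  -- the Leibniz rule for DKM with K-scalars
  have hDKM_smul : ∀ (a : K) (x : K ⊗[𝕂] M), DKM (a • x) = δ a • x + a • DKM x := by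
    intro a x
    induction x using TensorProduct.induction_on with
    | zero => simp [hDKM0]
    | tmul g m =>
      rw [smul_tmul', smul_eq_mul, hDKM, hδ_leibniz, TensorProduct.add_tmul, hDKM, smul_add,
        smul_tmul', smul_tmul', smul_tmul', smul_eq_mul, smul_eq_mul, smul_eq_mul]
      abel
    | add x y ihx ihy =>
      simp only [smul_add, hDKM_add, ihx, ihy]
      abel
  -- the key identity : Φ ∘ DKH is the commutator with the D's
  have key : ∀ (η : K ⊗[𝕂] (M →ₗ[𝕂] N)) (x : K ⊗[𝕂] M),
      Φ (DKH η) x = DKN (Φ η x) - Φ η (DKM x) := by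
    intro η
    induction η using TensorProduct.induction_on with
    | zero =>
      intro x
      simp [hDKH0, hDKM0, hDKN0]
    | tmul c φ =>
      intro x
      induction x using TensorProduct.induction_on with
      | zero =>
        simp [hDKM0, hDKN0]
      | tmul g m =>
        rw [hDKH, map_add, LinearMap.add_apply, hΦ, hΦ, hDH φ m, TensorProduct.tmul_sub,
          hΦ c g φ m, hDKN (c * g) (φ m), hδ_leibniz c g, TensorProduct.add_tmul,
          hDKM g m, map_add (Φ (c ⊗ₜ[𝕂] φ)), hΦ c (δ g) φ m, hΦ c g φ (DM m)]
        abel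
      | add x y ihx ihy =>
        simp only [hDKM_add, map_add, hDKN_add, ihx, ihy]
        abel
    | add η₁ η₂ ih₁ ih₂ =>
      intro x
      simp only [hDKH_add, map_add, LinearMap.add_apply, hDKN_add, ih₁, ih₂]
      abel
  -- part 1
  have part1 : ∀ h ∈ SH, ∀ x : K ⊗[𝕂] M, Φ h (DKM x) = DKN (Φ h x) := by
    intro h hh x
    have h0 : DKH h = 0 := (hSH h).mp hh
    have hx := key h x
    rw [h0, map_zero, LinearMap.zero_apply] at hx
    exact (sub_eq_zero.mp hx.symm).symm
  -- part 2
  have part2 : ∀ h ∈ SH, ∀ v ∈ SM, Φ h v ∈ SN := by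
    intro h hh v hv
    rw [hSN, ← part1 h hh v, (hSM v).mp hv, map_zero]
  -- degenerate case: M is trivial
  rcases Nat.eq_zero_or_pos (Module.finrank 𝕂 M) with h0 | hpos
  · have hsub : Subsingleton (K ⊗[𝕂] M) := by
      have hr : Module.finrank K (K ⊗[𝕂] M) = 0 := by
        rw [Module.finrank_baseChange, h0]
      exact Module.finrank_zero_iff.mp hr
    have hsubM : Subsingleton M := Module.finrank_zero_iff.mp h0
    have hsubH : Subsingleton (M →ₗ[𝕂] N) :=
      ⟨fun f g => LinearMap.ext fun m => by
        rw [Subsingleton.elim m 0, map_zero, map_zero]⟩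
    have hsubKH : Subsingleton (K ⊗[𝕂] (M →ₗ[𝕂] N)) := by
      refine ⟨fun x y => ?_⟩
      have hzero : ∀ z : K ⊗[𝕂] (M →ₗ[𝕂] N), z = 0 := by
        intro z
        induction z using TensorProduct.induction_on with
        | zero => rfl
        | tmul c φ => rw [Subsingleton.elim φ 0, TensorProduct.tmul_zero]
        | add a b iha ihb => rw [iha, ihb, add_zero]
      rw [hzero x, hzero y]
    refine ⟨part1, part2, ?_, ?_⟩
    · intro h _ _
      exact Subsingleton.elim h 0
    · intro L
      refine ⟨0, (hSH 0).mpr hDKH0, ?_⟩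
      intro v hv
      have hv0 : v = 0 := Subsingleton.elim v 0
      have hL : (⟨v, hv⟩ : SM) = 0 := Subtype.ext hv0
      rw [hL, map_zero, map_zero, LinearMap.zero_apply]
      rfl
  -- main case: a K-basis of K ⊗ M made of solutions
  have hfdSM : FiniteDimensional k SM :=
    FiniteDimensional.of_finrank_pos (by rw [hfullM]; exact hpos)
  have hne : Nonempty (Fin (Module.finrank k SM)) :=
    ⟨⟨0, by rw [hfullM]; exact hpos⟩⟩
  let b : Module.Basis (Fin (Module.finrank k SM)) k SM :=
    haveI := Module.Free.of_divisionRing k SM; Module.finBasis k SM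
  have hvS : ∀ i, ((b i : K ⊗[𝕂] M)) ∈ SM := fun i => (b i).2
  have hindepk : LinearIndependent k (fun i => ((b i : SM) : K ⊗[𝕂] M)) := by
    have := b.linearIndependent.map_injOn SM.subtype Subtype.val_injective.injOn
    exact this
  have hindepK : LinearIndependent K (fun i => ((b i : SM) : K ⊗[𝕂] M)) :=
    wronskian_indep' δ hδ_leibniz k hk DKM hDKM_add hDKM_smul _
      (fun i => (hSM _).mp (hvS i)) hindepk
  have hcard : Fintype.card (Fin (Module.finrank k SM)) = Module.finrank K (K ⊗[𝕂] M) := by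
    rw [Fintype.card_fin, Module.finrank_baseChange]
    exact hfullM
  let B : Module.Basis (Fin (Module.finrank k SM)) K (K ⊗[𝕂] M) :=
    basisOfLinearIndependentOfCardEqFinrank hindepK hcard
  have hB : ∀ i, B i = ((b i : SM) : K ⊗[𝕂] M) := fun i =>
    congrFun (coe_basisOfLinearIndependentOfCardEqFinrank hindepK hcard) i
  refine ⟨part1, part2, ?_, ?_⟩
  -- injectivity
  · intro h hh hvan
    have h0 : Φ h = 0 := B.ext fun i => by
      rw [hB, LinearMap.zero_apply]
      exact hvan _ (hvS i)
    apply hΦ_bij.injective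
    rw [h0, map_zero]
  -- surjectivity
  · intro L
    let T : (K ⊗[𝕂] M) →ₗ[K] (K ⊗[𝕂] N) := B.constr K fun i => ((L (b i) : SN) : K ⊗[𝕂] N)
    have hTB : ∀ i, T (B i) = ((L (b i) : SN) : K ⊗[𝕂] N) := fun i => B.constr_basis K _ i
    obtain ⟨h, hhT⟩ := hΦ_bij.surjective T
    have hTSM : ∀ (v : K ⊗[𝕂] M) (hv : v ∈ SM), T v = ((L ⟨v, hv⟩ : SN) : K ⊗[𝕂] N) := by
      have heq : (T.restrictScalars k).comp SM.subtype = SN.subtype.comp L := by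
        apply b.ext
        intro i
        simp only [LinearMap.comp_apply, LinearMap.restrictScalars_apply,
          Submodule.subtype_apply]
        rw [← hB, hTB]
      intro v hv
      exact LinearMap.congr_fun heq ⟨v, hv⟩
    refine ⟨h, ?_, ?_⟩
    · rw [hSH]
      have hΦ0 : Φ (DKH h) = 0 := B.ext fun i => by
        rw [key h (B i), hhT, LinearMap.zero_apply]
        have h1 : DKM (B i) = 0 := by rw [hB]; exact (hSM _).mp (hvS i)
        have h2 : DKN (T (B i)) = 0 := by
          rw [hTB]
          exact (hSN _).mp (L (b i)).2
        rw [h1, map_zero, sub_zero, h2]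
      apply hΦ_bij.injective
      rw [hΦ0, map_zero]
    · intro v hv
      rw [hhT]
      exact hTSM v hv
end

section
/- Let R be a commutative ring with a derivation δ, and let g be an invertible n×n matrix over R. Define the 2n×2n block matrices P(g) = [[g, δg],[0, g]] (δ applied entrywise) and S = [[0, I_n],[I_n, 0]]. Then P((g^{-1})^T) = S · (P(g)^{-1})^T · S, where ^T denotes matrix transpose. -/
/-- The first prolongation `P(g) = [[g, δg],[0, g]]` of an `n × n` matrix. -/
def prolong {R : Type*} [CommRing R] {n : ℕ} (δ : R → R) (g : Matrix (Fin n) (Fin n) R) :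
    Matrix (Fin n ⊕ Fin n) (Fin n ⊕ Fin n) R :=
  Matrix.fromBlocks g (g.map δ) 0 g

/-- for a derivation `δ` on a commutative ring `R`, an invertible `n × n`
matrix `g` (with two-sided inverse `gi`), the block swap `S = [[0, I],[I, 0]]`, and any
two-sided inverse `Q` of `P(g)`, one has `P((g⁻¹)ᵀ) = S · (P(g)⁻¹)ᵀ · S`. -/
theorem stmt_10 {R : Type*} [CommRing R] {n : ℕ}
    (δ : R → R)
    (hδ_add : ∀ a b : R, δ (a + b) = δ a + δ b)
    (hδ_leibniz : ∀ a b : R, δ (a * b) = δ a * b + a * δ b)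
    (g gi : Matrix (Fin n) (Fin n) R)
    (hgi : g * gi = 1) (hig : gi * g = 1)
    (S : Matrix (Fin n ⊕ Fin n) (Fin n ⊕ Fin n) R)
    (hS : S = Matrix.fromBlocks 0 1 1 0)
    (Q : Matrix (Fin n ⊕ Fin n) (Fin n ⊕ Fin n) R)
    (hQ : prolong δ g * Q = 1) (hQ' : Q * prolong δ g = 1) :
    prolong δ gi.transpose = S * Q.transpose * S := by
  have hδ0 : δ 0 = 0 := by
    have := hδ_add 0 0
    simpa using this.symm
  have hδ1 : δ 1 = 0 := by
    have := hδ_leibniz 1 1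
    simpa using this
  -- δ as an AddMonoidHom
  let D : R →+ R := ⟨⟨δ, hδ0⟩, hδ_add⟩
  have hmap_mul : ∀ A B : Matrix (Fin n) (Fin n) R,
      (A * B).map δ = A.map δ * B + A * B.map δ := by
    intro A B
    ext i j
    simp only [Matrix.map_apply, Matrix.mul_apply, Matrix.add_apply]
    show D (∑ k, A i k * B k j) = _
    rw [map_sum, ← Finset.sum_add_distrib]
    congr 1; ext k
    exact hδ_leibniz _ _
  have hmap_one : (1 : Matrix (Fin n) (Fin n) R).map δ = 0 := by
    ext i j
    simp only [Matrix.map_apply, Matrix.one_apply, Matrix.zero_apply]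
    split <;> simp [hδ0, hδ1]
  have hrel : gi.map δ * g + gi * g.map δ = 0 := by
    have := hmap_mul gi g
    rw [hig, hmap_one] at this
    exact this.symm
  have hgiδ : gi.map δ = -(gi * g.map δ * gi) := by
    have h2 : gi.map δ + gi * g.map δ * gi = 0 := by
      have h := congrArg (fun M => M * gi) hrel
      simpa [add_mul, mul_assoc, hgi] using h
    exact eq_neg_of_add_eq_zero_left h2
  -- the explicit inverse of the prolongation
  set X : Matrix (Fin n) (Fin n) R := -(gi * g.map δ * gi) with hX
  have hQeq : Q = Matrix.fromBlocks gi X 0 gi := by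
    have hleft : Matrix.fromBlocks gi X 0 gi * prolong δ g = 1 := by
      rw [prolong, Matrix.fromBlocks_multiply]
      rw [hX]
      have h1 : gi * g.map δ + -(gi * g.map δ * gi * g) = 0 := by
        rw [mul_assoc (gi * g.map δ), hig, mul_one]; simp
      simp [hig, h1, ← Matrix.fromBlocks_one]
    calc Q = Q * (prolong δ g * (Matrix.fromBlocks gi X 0 gi)) := by
              rw [mul_eq_one_comm.mp hleft, mul_one]
      _ = (Q * prolong δ g) * Matrix.fromBlocks gi X 0 gi := by rw [mul_assoc]
      _ = Matrix.fromBlocks gi X 0 gi := by rw [hQ', one_mul]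
  rw [hQeq, hS, prolong, Matrix.fromBlocks_transpose, Matrix.fromBlocks_multiply,
    Matrix.fromBlocks_multiply]
  simp [Matrix.transpose_map, hgiδ]
end
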